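/- arXiv:2402.00962 — 4 statements merged into one kernel-verified Lean document; each statement's English description precedes it below -/
import Mathlib

section
/- Let F, G : Type u ⥤ Type u be endofunctors and α : F ⟶ G an epi natural transformation. Then for every relation R : X₁ → X₂ → Prop and all u : F.obj X₁, v : F.obj X₂: Rel(F)_{≡^α}(R) (u, v) holds iff Rel(G)(R) (α.app X₁ u, α.app X₂ v) holds, where ≡^α is regarded as an order on F. -/
open CategoryTheory

universe u

/-- Relation lifting `Rel(F)(R)`. -/
def RelLift (F : Type u ⥤ Type u) {X Y : Type u} (R : X → Y → Prop)
    (u : F.obj X) (v : F.obj Y) : Prop :=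
  ∃ w : F.obj {p : X × Y // R p.1 p.2},
    F.map (TypeCat.ofHom (fun p => p.1.1)) w = u ∧ F.map (TypeCat.ofHom (fun p => p.1.2)) w = v

/-- `R` is an `F`-bisimulation between coalgebras `c` and `d`. -/
def IsBisimulation (F : Type u ⥤ Type u) {X Y : Type u}
    (c : X → F.obj X) (d : Y → F.obj Y) (R : X → Y → Prop) : Prop :=
  ∀ x y, R x y → RelLift F R (c x) (d y)

/-- Order-enriched relation lifting `Rel(F)_⊑(R)`. -/
def RelLiftOrd (F : Type u ⥤ Type u) (r : ∀ X : Type u, F.obj X → F.obj X → Prop)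
    {X Y : Type u} (R : X → Y → Prop) (u : F.obj X) (v : F.obj Y) : Prop :=
  ∃ w : F.obj {p : X × Y // R p.1 p.2},
    r X u (F.map (TypeCat.ofHom (fun p => p.1.1)) w) ∧ r Y (F.map (TypeCat.ofHom (fun p => p.1.2)) w) v

/-- `R` is a `⊑`-simulation between coalgebras `c` and `d`. -/
def IsSimulation (F : Type u ⥤ Type u) (r : ∀ X : Type u, F.obj X → F.obj X → Prop)
    {X Y : Type u} (c : X → F.obj X) (d : Y → F.obj Y) (R : X → Y → Prop) : Prop :=
  ∀ x y, R x y → RelLiftOrd F r R (c x) (d y)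

/-- The kernel equivalence `≡^α` of a natural transformation `α : F ⟶ G`. -/
def kernelRel {F G : Type u ⥤ Type u} (α : F ⟶ G) (X : Type u) :
    F.obj X → F.obj X → Prop :=
  fun u u' => α.app X u = α.app X u'

/-- `r` is an order on the functor `F`: a functorial family of preorders. -/
def IsFunctorOrder (F : Type u ⥤ Type u)
    (r : ∀ X : Type u, F.obj X → F.obj X → Prop) : Prop :=
  (∀ (X : Type u) (u : F.obj X), r X u u) ∧
  (∀ (X : Type u) (u v w : F.obj X), r X u v → r X v w → r X u w) ∧
  (∀ (X Y : Type u) (f : X → Y) (u u' : F.obj X), r X u u' → r Y (F.map (TypeCat.ofHom f) u) (F.map (TypeCat.ofHom f) u'))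

/-- for an epi natural transformation `α`, the `≡^α`-enriched lifting on `F`
corresponds exactly to the plain relation lifting on `G` through `α`. -/
theorem relLiftOrd_kernelRel_iff {F G : Type u ⥤ Type u} (α : F ⟶ G)
    (hepi : ∀ X : Type u, Function.Surjective (α.app X))
    {X₁ X₂ : Type u} (R : X₁ → X₂ → Prop) (u : F.obj X₁) (v : F.obj X₂) :
    RelLiftOrd F (kernelRel α) R u v ↔ RelLift G R (α.app X₁ u) (α.app X₂ v) := by
  constructor
  · rintro ⟨w, h1, h2⟩
    refine ⟨α.app _ w, ?_, ?_⟩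
    · rw [← FunctorToTypes.naturality α (TypeCat.ofHom (fun p : {p : X₁ × X₂ // R p.1 p.2} => p.1.1)) w]
      exact h1.symm
    · rw [← FunctorToTypes.naturality α (TypeCat.ofHom (fun p : {p : X₁ × X₂ // R p.1 p.2} => p.1.2)) w]
      exact h2
  · rintro ⟨w', h1, h2⟩
    obtain ⟨w, hw⟩ := hepi _ w'
    refine ⟨w, ?_, ?_⟩
    · show α.app _ u = α.app _ _
      rw [FunctorToTypes.naturality α (TypeCat.ofHom (fun p : {p : X₁ × X₂ // R p.1 p.2} => p.1.1)) w, hw, h1]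
    · show α.app _ _ = α.app _ v
      rw [FunctorToTypes.naturality α (TypeCat.ofHom (fun p : {p : X₁ × X₂ // R p.1 p.2} => p.1.2)) w, hw, h2]
end

section
/- Let F, G : Type u ⥤ Type u be endofunctors, α : F ⟶ G an epi natural transformation, and R : X → Y → Prop a G-bisimulation between G-coalgebras b₁ : X → G.obj X and b₂ : Y → G.obj Y. Assume R is near injective: for every x : X the set {b₂ y | y such that R x y} has at most one element, and for every y : Y the set {b₁ x | x such that R x y} has at most one element. Then there exist F-representations a₁ : X → F.obj X of b₁ and a₂ : Y → F.obj Y of b₂ such that R is an F-bisimulation between a₁ and a₂. -/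
open CategoryTheory

universe u

/-- a near injective `G`-bisimulation can be realized as an `F`-bisimulation
between suitable `F`-representations. -/
theorem near_injective_bisim_reflects {F G : Type u ⥤ Type u} (α : F ⟶ G)
    (hepi : ∀ X : Type u, Function.Surjective (α.app X))
    {X Y : Type u} (b₁ : X → G.obj X) (b₂ : Y → G.obj Y)
    (R : X → Y → Prop) (hR : IsBisimulation G b₁ b₂ R)
    (hni₁ : ∀ x : X, {g : G.obj Y | ∃ y, R x y ∧ g = b₂ y}.Subsingleton)
    (hni₂ : ∀ y : Y, {g : G.obj X | ∃ x, R x y ∧ g = b₁ x}.Subsingleton) :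
    ∃ (a₁ : X → F.obj X) (a₂ : Y → F.obj Y),
      α.app X ∘ a₁ = b₁ ∧ α.app Y ∘ a₂ = b₂ ∧ IsBisimulation F a₁ a₂ R := by
  classical
  have key : ∀ (g₁ : G.obj X) (g₂ : G.obj Y),
      (∃ x y, R x y ∧ b₁ x = g₁ ∧ b₂ y = g₂) →
      ∃ w : F.obj {p : X × Y // R p.1 p.2},
        α.app X (F.map (TypeCat.ofHom (fun p => p.1.1)) w) = g₁ ∧
        α.app Y (F.map (TypeCat.ofHom (fun p => p.1.2)) w) = g₂ := by
    rintro g₁ g₂ ⟨x, y, hxy, rfl, rfl⟩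
    obtain ⟨w₀, hw₁, hw₂⟩ := hR x y hxy
    obtain ⟨w, hw⟩ := hepi _ w₀
    have n₁ := NatTrans.naturality_apply α (X := {p : X × Y // R p.1 p.2}) (Y := X)
      (TypeCat.ofHom (fun p => p.1.1)) w
    have n₂ := NatTrans.naturality_apply α (X := {p : X × Y // R p.1 p.2}) (Y := Y)
      (TypeCat.ofHom (fun p => p.1.2)) w
    exact ⟨w, by rw [n₁, hw, hw₁], by rw [n₂, hw, hw₂]⟩
  set W : ∀ (g₁ : G.obj X) (g₂ : G.obj Y),
      (∃ x y, R x y ∧ b₁ x = g₁ ∧ b₂ y = g₂) → F.obj {p : X × Y // R p.1 p.2} :=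
    fun g₁ g₂ h => (key g₁ g₂ h).choose with hW
  have Wspec : ∀ g₁ g₂ h, α.app X (F.map (TypeCat.ofHom (fun p => p.1.1)) (W g₁ g₂ h)) = g₁ ∧
      α.app Y (F.map (TypeCat.ofHom (fun p => p.1.2)) (W g₁ g₂ h)) = g₂ :=
    fun g₁ g₂ h => (key g₁ g₂ h).choose_spec
  have Weq : ∀ g₁ g₁' g₂ g₂' h h', g₁ = g₁' → g₂ = g₂' → W g₁ g₂ h = W g₁' g₂' h' := by
    rintro g₁ _ g₂ _ h h' rfl rfl; rfl
  refine ⟨fun x => if hx : ∃ y, R x y then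
      F.map (TypeCat.ofHom (fun p => p.1.1)) (W (b₁ x) (b₂ hx.choose) ⟨x, hx.choose, hx.choose_spec, rfl, rfl⟩)
    else (hepi X (b₁ x)).choose,
    fun y => if hy : ∃ x, R x y then
      F.map (TypeCat.ofHom (fun p => p.1.2)) (W (b₁ hy.choose) (b₂ y) ⟨hy.choose, y, hy.choose_spec, rfl, rfl⟩)
    else (hepi Y (b₂ y)).choose, ?_, ?_, ?_⟩
  · funext x
    simp only [Function.comp_apply]
    split
    next h => exact (Wspec (b₁ x) (b₂ h.choose) ⟨x, h.choose, h.choose_spec, rfl, rfl⟩).1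
    next => exact (hepi X (b₁ x)).choose_spec
  · funext y
    simp only [Function.comp_apply]
    split
    next h => exact (Wspec (b₁ h.choose) (b₂ y) ⟨h.choose, y, h.choose_spec, rfl, rfl⟩).2
    next => exact (hepi Y (b₂ y)).choose_spec
  · intro x y hxy
    have hx : ∃ y, R x y := ⟨y, hxy⟩
    have hy : ∃ x, R x y := ⟨x, hxy⟩
    refine ⟨W (b₁ x) (b₂ y) ⟨x, y, hxy, rfl, rfl⟩, ?_, ?_⟩
    · beta_reduce
      rw [dif_pos hx]
      exact congrArg (F.map (TypeCat.ofHom fun p => p.1.1))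
        (Weq _ _ _ _ ⟨x, y, hxy, rfl, rfl⟩ ⟨x, hx.choose, hx.choose_spec, rfl, rfl⟩ rfl (hni₁ x ⟨y, hxy, rfl⟩ ⟨hx.choose, hx.choose_spec, rfl⟩))
    · beta_reduce
      rw [dif_pos hy]
      exact congrArg (F.map (TypeCat.ofHom fun p => p.1.2))
        (Weq _ _ _ _ ⟨x, y, hxy, rfl, rfl⟩ ⟨hy.choose, y, hy.choose_spec, rfl, rfl⟩ (hni₂ y ⟨x, hxy, rfl⟩ ⟨hy.choose, hy.choose_spec, rfl⟩) rfl)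
end

section
/- There exist set-coalgebras with a powerset bisimulation between them but no multiset bisimulation between any of their multiset representations: let Y := {β : List ℕ // ∀ i (h : i < β.length), β.get ⟨i, h⟩ ≤ i}, let t_Y : Y → Set Y send β to the set of its valid one-step extensions {β' : Y | ∃ j ≤ (β : List ℕ).length, (β' : List ℕ) = (β : List ℕ) ++ [j]}, and let t_X : Unit → Set Unit send u to {u}. Then for every pair of multiset coalgebras a₁ : Unit → Multiset Unit and a₂ : Y → Multiset Y whose supports realize t_X and t_Y (i.e., {x | x ∈ a₁ u} = t_X u for all u and {β' | β' ∈ a₂ β} = t_Y β for all β), there is no Mul-bisimulation R between a₁ and a₂ with R () ε, where ε : Y is the empty list and Mul is the multiset endofunctor (object map X ↦ Multiset X, action Multiset.map). -/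
open CategoryTheory

universe u

/-- The multiset endofunctor. -/
def MSetF : Type u ⥤ Type u where
  obj X := Multiset X
  map f := TypeCat.ofHom (Multiset.map f)
  map_id := by intro X; ext M; simp [types_id]
  map_comp := by intro X Y Z f g; ext M; simp [types_comp]

/-- The state space of the infinitely branching system: lists `β` of naturals
with `β i ≤ i` at every position. -/
def Yt : Type := {β : List ℕ // ∀ i (h : i < β.length), β.get ⟨i, h⟩ ≤ i}

/-- The transition function of the infinitely branching system: all one-step
valid extensions. -/
def tY : Yt → Set Yt := fun β =>
  {β' | ∃ j ≤ β.1.length, β'.1 = β.1 ++ [j]}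

/-- The one-state, one-loop system. -/
def tX : Unit → Set Unit := fun u => {u}

/-- The empty list as an element of `Yt`. -/
def epsY : Yt := ⟨[], fun i h => absurd h (Nat.not_lt_zero i)⟩

/-- Extension of `β : Yt` by a value `min j β.1.length`. -/
def extY (β : Yt) (j : ℕ) : Yt :=
  ⟨β.1 ++ [min j β.1.length], by
    intro i h
    rw [List.length_append, List.length_singleton] at h
    rcases lt_or_ge i β.1.length with hi | hi
    · have : (β.1 ++ [min j β.1.length]).get ⟨i, by
        rw [List.length_append, List.length_singleton]; omega⟩ = β.1.get ⟨i, hi⟩ := by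
        simp [List.get_eq_getElem, List.getElem_append_left, hi]
      rw [this]; exact β.2 i hi
    · have hie : i = β.1.length := by omega
      subst hie
      have : (β.1 ++ [min j β.1.length]).get ⟨β.1.length, by
        rw [List.length_append, List.length_singleton]; omega⟩ = min j β.1.length := by
        simp
      rw [this]; exact min_le_right _ _⟩

lemma mem_a₂ {a₂ : Yt → Multiset Yt} (h₂ : ∀ β, {β' | β' ∈ a₂ β} = tY β)
    (β β' : Yt) : β' ∈ a₂ β ↔ β' ∈ tY β := by
  rw [← h₂ β]; rfl

lemma extY_mem {a₂ : Yt → Multiset Yt} (h₂ : ∀ β, {β' | β' ∈ a₂ β} = tY β)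
    (β : Yt) (j : ℕ) (hj : j ≤ β.1.length) : extY β j ∈ a₂ β := by
  rw [mem_a₂ h₂]
  exact ⟨j, hj, by simp [extY, Nat.min_eq_left hj]⟩

instance : DecidableEq Yt := fun a b => decidable_of_iff (a.1 = b.1) Subtype.ext_iff.symm

lemma card_lower {a₂ : Yt → Multiset Yt} (h₂ : ∀ β, {β' | β' ∈ a₂ β} = tY β)
    (β : Yt) : β.1.length + 1 ≤ (a₂ β).card := by
  have hinj : Set.InjOn (extY β) (Finset.range (β.1.length + 1)) := by
    intro j hj k hk hjk
    simp only [Finset.coe_range, Set.mem_Iio] at hj hk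
    have := congrArg Subtype.val hjk
    simp only [extY] at this
    have h' := List.append_inj_right this rfl
    simp only [List.cons.injEq] at h'
    omega
  calc β.1.length + 1 = (Finset.range (β.1.length + 1)).card := by simp
    _ ≤ (a₂ β).toFinset.card := by
        apply Finset.card_le_card_of_injOn (extY β)
        · intro j hj
          rw [Finset.mem_coe, Multiset.mem_toFinset]
          exact extY_mem h₂ β j (by simp at hj; omega)
        · exact hinj
    _ ≤ (a₂ β).card := Multiset.toFinset_card_le _

/-- although `tX` and `tY` are related by a powerset bisimulation
(relating `()` and `ε`), there is no multiset bisimulation relating `()` and `ε`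
between any multiset representations of `tX` and `tY`. -/
theorem no_multiset_bisimulation
    (a₁ : Unit → Multiset Unit) (a₂ : Yt → Multiset Yt)
    (h₁ : ∀ u, {x | x ∈ a₁ u} = tX u)
    (h₂ : ∀ β, {β' | β' ∈ a₂ β} = tY β)
    (R : Unit → Yt → Prop) (hR : IsBisimulation MSetF a₁ a₂ R) :
    ¬ R () epsY := by
  intro h0
  -- key facts from bisimulation
  have key : ∀ β, R () β →
      (a₂ β).card = (a₁ ()).card ∧ ∃ β', R () β' ∧ β'.1.length = β.1.length + 1 := by
    intro β hβ
    obtain ⟨(w : Multiset {p : Unit × Yt // R p.1 p.2}), hw1, hw2⟩ := hR () β hβ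
    have hw1' : Multiset.map (fun p : {p : Unit × Yt // R p.1 p.2} => p.1.1) w = a₁ () := hw1
    have hw2' : Multiset.map (fun p : {p : Unit × Yt // R p.1 p.2} => p.1.2) w = a₂ β := hw2
    constructor
    · rw [← hw1', ← hw2', Multiset.card_map, Multiset.card_map]
    · have hmem : extY β 0 ∈ a₂ β := extY_mem h₂ β 0 (Nat.zero_le _)
      rw [← hw2', Multiset.mem_map] at hmem
      obtain ⟨p, hp, hpe⟩ := hmem
      refine ⟨p.1.2, ?_, ?_⟩
      · have := p.2
        have hu : p.1.1 = () := rfl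
        rwa [hu] at this
      · rw [hpe]
        simp [extY]
  have chain : ∀ n, ∃ β, R () β ∧ β.1.length = n := by
    intro n
    induction n with
    | zero => exact ⟨epsY, h0, rfl⟩
    | succ n ih =>
        obtain ⟨β, hβ, hlen⟩ := ih
        obtain ⟨_, β', hβ', hlen'⟩ := key β hβ
        exact ⟨β', hβ', by omega⟩
  obtain ⟨β, hβ, hlen⟩ := chain (a₁ ()).card
  have h1 := (key β hβ).1
  have h2' := card_lower h₂ β
  omega
end

section
/- Bisimulations between alternating probabilistic systems are exactly ≡^{α}-simulations between alternating multi-transition systems: fix a type A of actions. Let F_alt : Type u ⥤ Type u have object map X ↦ Multiset (A × X) ⊕ {M : Multiset (ℝ × (A × X)) // M is a probability multiset on A × X}, with action given on the left summand by Multiset.map (Prod.map id f) and on the right summand by the induced map Multiset.map (fun q => (q.1, (q.2.1, f q.2.2))). Let G_alt : Type u ⥤ Type u have object map X ↦ Finset (A × X) ⊕ {p : A × X → ℝ // p has finite support, 0 ≤ p c ≤ 1 for all c, and the sum of p over its support equals 1}, with action Finset.image (Prod.map id f) (classical decidable equality) on the left and the pushforward along Prod.map id f on the right. Let α : F_alt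 ⟶ G_alt have components acting as Multiset.toFinset on the left summand and as D_M (on A × X) on the right summand; α is a natural transformation with surjective components. Then for any G_alt-coalgebras b₁ : X₁ → G_alt.obj X₁, b₂ : X₂ → G_alt.obj X₂ and any F_alt-coalgebras a₁, a₂ with α.app X₁ ∘ a₁ = b₁ and α.app X₂ ∘ a₂ = b₂, a relation R : X₁ → X₂ → Prop is a G_alt-bisimulation between b₁ and b₂ iff it is a ≡^{α}-simulation between a₁ and a₂. -/
open CategoryTheory

universe u

open scoped Classical

/-- `M` is a probability multiset: all weights in `[0,1]` and total weight `1`. -/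
def IsProbMultiset {X : Type u} (M : Multiset (ℝ × X)) : Prop :=
  (∀ q ∈ M, 0 ≤ q.1 ∧ q.1 ≤ 1) ∧ (M.map Prod.fst).sum = 1

/-- The discrete distribution `D_M(M)` induced by a multiset of weighted elements. -/
noncomputable def DM {X : Type u} (M : Multiset (ℝ × X)) (x : X) : ℝ :=
  ((M.filter (fun q => q.2 = x)).map Prod.fst).sum

theorem isProbMultiset_map {X Y : Type u} (f : X → Y) (M : Multiset (ℝ × X))
    (h : IsProbMultiset M) :
    IsProbMultiset (M.map (fun q => (q.1, f q.2))) := by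
  refine ⟨?_, ?_⟩
  · intro q hq
    obtain ⟨p, hp, rfl⟩ := Multiset.mem_map.mp hq
    exact h.1 p hp
  · rw [Multiset.map_map]
    exact h.2

/-- `p` is a finitely supported probability distribution. -/
def IsProbDist {X : Type u} (p : X →₀ ℝ) : Prop :=
  (∀ x, 0 ≤ p x ∧ p x ≤ 1) ∧ ∑ x ∈ p.support, p x = 1

theorem isProbDist_mapDomain {X Y : Type u} (f : X → Y) (p : X →₀ ℝ)
    (h : IsProbDist p) : IsProbDist (Finsupp.mapDomain f p) := by
  obtain ⟨hbd, hsum⟩ := h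
  have happ : ∀ y, Finsupp.mapDomain f p y = ∑ x ∈ p.support, if f x = y then p x else 0 := by
    intro y
    rw [Finsupp.mapDomain, Finsupp.sum_apply, Finsupp.sum]
    exact Finset.sum_congr rfl fun x _ => Finsupp.single_apply
  constructor
  · intro y
    rw [happ]
    constructor
    · exact Finset.sum_nonneg fun x _ => by split <;> simp [(hbd x).1]
    · calc (∑ x ∈ p.support, if f x = y then p x else 0) ≤ ∑ x ∈ p.support, p x :=
            Finset.sum_le_sum fun x _ => by split <;> simp [(hbd x).1]
        _ = 1 := hsum
  · have key := Finsupp.sum_mapDomain_index (f := f) (s := p) (h := fun _ (m : ℝ) => m)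
      (fun _ => rfl) (fun _ _ _ => rfl)
    simpa [Finsupp.sum] using key.trans (by simpa [Finsupp.sum] using hsum)

theorem DM_support_finite {X : Type u} (M : Multiset (ℝ × X)) :
    (Function.support (DM M)).Finite := by
  apply Set.Finite.subset (M.map Prod.snd).toFinset.finite_toSet
  intro x hx
  simp only [Function.mem_support] at hx
  by_contra hmem
  apply hx
  have : M.filter (fun q => q.2 = x) = 0 := by
    rw [Multiset.filter_eq_nil]
    intro q hq hq2
    exact hmem (by simp [Multiset.mem_toFinset]; exact ⟨q.1, by rw [← hq2]; simpa using hq⟩)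
  simp [DM, this]

/-- `D_M(M)` as a finitely supported function. -/
noncomputable def DMfinsupp {X : Type u} (M : Multiset (ℝ × X)) : X →₀ ℝ :=
  Finsupp.ofSupportFinite (DM M) (DM_support_finite M)

theorem DM_cons {X : Type u} (q : ℝ × X) (M : Multiset (ℝ × X)) (x : X) :
    DM (q ::ₘ M) x = (if q.2 = x then q.1 else 0) + DM M x := by
  simp only [DM, Multiset.filter_cons]
  split <;> simp

theorem DMfinsupp_cons {X : Type u} (q : ℝ × X) (M : Multiset (ℝ × X)) :
    DMfinsupp (q ::ₘ M) = Finsupp.single q.2 q.1 + DMfinsupp M := by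
  apply Finsupp.ext
  intro x
  show DM (q ::ₘ M) x = Finsupp.single q.2 q.1 x + DM M x
  rw [DM_cons, Finsupp.single_apply]

theorem DMfinsupp_zero {X : Type u} : DMfinsupp (0 : Multiset (ℝ × X)) = 0 := by
  apply Finsupp.ext
  intro x
  show DM (0 : Multiset (ℝ × X)) x = 0
  simp [DM]

theorem DMfinsupp_natural {X Y : Type u} (f : X → Y) (M : Multiset (ℝ × X)) :
    Finsupp.mapDomain f (DMfinsupp M) = DMfinsupp (M.map (fun q => (q.1, f q.2))) := by
  induction M using Multiset.induction_on with
  | empty => simp [DMfinsupp_zero]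
  | cons q M ih =>
    rw [Multiset.map_cons, DMfinsupp_cons, DMfinsupp_cons, Finsupp.mapDomain_add,
      Finsupp.mapDomain_single, ih]

theorem sum_DM {X : Type u} (M : Multiset (ℝ × X)) (S : Finset X)
    (hS : ∀ q ∈ M, q.2 ∈ S) :
    ∑ x ∈ S, DM M x = (M.map Prod.fst).sum := by
  induction M using Multiset.induction_on with
  | empty => simp [DM]
  | cons q M ih =>
    have hq : q.2 ∈ S := hS q (Multiset.mem_cons_self q M)
    have hM : ∀ q' ∈ M, q'.2 ∈ S := fun q' h' => hS q' (Multiset.mem_cons_of_mem h')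
    have hDM : ∀ x, DM (q ::ₘ M) x = (if q.2 = x then q.1 else 0) + DM M x := by
      intro x
      simp only [DM, Multiset.filter_cons]
      split <;> simp
    simp only [hDM]
    rw [Finset.sum_add_distrib, ih hM, Finset.sum_ite_eq]
    simp [hq]

theorem isProbDist_DMfinsupp {X : Type u} (M : Multiset (ℝ × X))
    (h : IsProbMultiset M) : IsProbDist (DMfinsupp M) := by
  have hco : ∀ x, DMfinsupp M x = DM M x := fun x => rfl
  have hnn : ∀ x, 0 ≤ DM M x := by
    intro x
    apply Multiset.sum_nonneg
    intro a ha
    obtain ⟨q, hq, rfl⟩ := Multiset.mem_map.mp ha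
    exact (h.1 q (Multiset.mem_of_mem_filter hq)).1
  have hle : ∀ x, DM M x ≤ 1 := by
    intro x
    have hnn' : 0 ≤ ((M.filter (fun q => ¬ q.2 = x)).map Prod.fst).sum := by
      apply Multiset.sum_nonneg
      intro a ha
      obtain ⟨q, hq, rfl⟩ := Multiset.mem_map.mp ha
      exact (h.1 q (Multiset.mem_of_mem_filter hq)).1
    have hsplit : DM M x + ((M.filter (fun q => ¬ q.2 = x)).map Prod.fst).sum
        = (M.map Prod.fst).sum := by
      conv_rhs => rw [← Multiset.filter_add_not (fun q => q.2 = x) M]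
      rw [Multiset.map_add, Multiset.sum_add]
      rfl
    have := h.2
    linarith
  refine ⟨fun x => ⟨hnn x, hle x⟩, ?_⟩
  have hsub : (DMfinsupp M).support ⊆ (M.map Prod.snd).toFinset := by
    intro x hx
    have hx' : DM M x ≠ 0 := by
      rw [← hco x]
      exact Finsupp.mem_support_iff.mp hx
    by_contra hmem
    apply hx'
    have : M.filter (fun q => q.2 = x) = 0 := by
      rw [Multiset.filter_eq_nil]
      intro q hq hq2
      exact hmem (by simp [Multiset.mem_toFinset]; exact ⟨q.1, by rw [← hq2]; simpa using hq⟩)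
    simp [DM, this]
  have hbig : ∑ x ∈ (M.map Prod.snd).toFinset, DMfinsupp M x = 1 := by
    simp only [hco]
    rw [sum_DM M _ (fun q hq => by simp [Multiset.mem_toFinset]; exact ⟨q.1, by simpa using hq⟩)]
    exact h.2
  rw [Finset.sum_subset hsub (fun x _ hx => Finsupp.notMem_support_iff.mp hx), hbig]


/-- The alternating multi-transition functor `F_alt`: a state offers either a
multiset of labelled transitions or a probability multiset of labelled transitions. -/
noncomputable def AltMSetF (A : Type u) : Type u ⥤ Type u where
  obj X := Multiset (A × X) ⊕ {M : Multiset (ℝ × (A × X)) // IsProbMultiset M}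
  map f := TypeCat.ofHom (Sum.map (Multiset.map (Prod.map id f))
    (fun M => ⟨M.1.map (fun q => (q.1, (q.2.1, f q.2.2))),
      isProbMultiset_map (Prod.map id f) M.1 M.2⟩))
  map_id := by
    intro X
    ext u
    cases u with
    | inl m => simp [types_id]
    | inr M =>
      show Sum.inr _ = Sum.inr _
      apply congrArg; apply Subtype.ext
      simp [types_id]
  map_comp := by
    intro X Y Z f g
    ext u
    cases u with
    | inl m =>
      show Sum.inl _ = Sum.inl _
      apply congrArg
      simp [types_comp, Multiset.map_map, Prod.map_map]
    | inr M =>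
      show Sum.inr _ = Sum.inr _
      apply congrArg; apply Subtype.ext
      simp [types_comp, Multiset.map_map]

/-- The alternating probabilistic functor `G_alt`: a state offers either a finite set of
labelled transitions or a finitely supported probability distribution on them. -/
noncomputable def AltDistF (A : Type u) : Type u ⥤ Type u where
  obj X := Finset (A × X) ⊕ {p : (A × X) →₀ ℝ // IsProbDist p}
  map f := TypeCat.ofHom (Sum.map (Finset.image (Prod.map id f))
    (fun p => ⟨Finsupp.mapDomain (Prod.map id f) p.1,
      isProbDist_mapDomain (Prod.map id f) p.1 p.2⟩))
  map_id := by
    intro X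
    ext u
    cases u with
    | inl s => simp [types_id]
    | inr p =>
      show Sum.inr _ = Sum.inr _
      apply congrArg; apply Subtype.ext
      simp [types_id, Finsupp.mapDomain_id]
  map_comp := by
    intro X Y Z f g
    ext u
    cases u with
    | inl s =>
      show Sum.inl _ = Sum.inl _
      apply congrArg
      simp [types_comp, Finset.image_image, Prod.map_comp_map]
    | inr p =>
      show Sum.inr _ = Sum.inr _
      apply congrArg; apply Subtype.ext
      simp [types_comp, ← Finsupp.mapDomain_comp, Prod.map_comp_map]

/-- The natural transformation `α : F_alt ⟶ G_alt`, acting as the multiset support on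
non-deterministic states and as `D_M` on probabilistic states. -/
noncomputable def alphaAlt (A : Type u) : AltMSetF.{u} A ⟶ AltDistF.{u} A where
  app X := TypeCat.ofHom (Sum.map Multiset.toFinset
    (fun M => ⟨DMfinsupp M.1, isProbDist_DMfinsupp M.1 M.2⟩))
  naturality := by
    intro X Y f
    ext u
    cases u with
    | inl m =>
      show Sum.inl _ = Sum.inl _
      apply congrArg
      simp [Multiset.toFinset_map]
    | inr M =>
      show Sum.inr _ = Sum.inr _
      apply congrArg
      apply Subtype.ext
      exact (DMfinsupp_natural (Prod.map id f) M.1).symm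

theorem DMfinsupp_map_single {X : Type u} (s : Multiset X) (g : X → ℝ) :
    DMfinsupp (s.map fun x => (g x, x)) = (s.map fun x => Finsupp.single x (g x)).sum := by
  induction s using Multiset.induction_on with
  | empty => simp [DMfinsupp_zero]
  | cons a s ih => simp [DMfinsupp_cons, ih]

theorem alphaAlt_surjective (A : Type u) (X : Type u) :
    Function.Surjective ((alphaAlt A).app X) := by
  intro v
  change Finset (A × X) ⊕ {p : (A × X) →₀ ℝ // IsProbDist p} at v
  cases v with
  | inl s =>
    refine ⟨Sum.inl s.val, ?_⟩
    show Sum.inl s.val.toFinset = Sum.inl s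
    simp
  | inr p =>
    obtain ⟨p, hp⟩ := p
    have hM : IsProbMultiset (p.support.val.map fun x => (p x, x)) := by
      constructor
      · intro q hq
        obtain ⟨x, _, rfl⟩ := Multiset.mem_map.mp hq
        exact hp.1 x
      · rw [Multiset.map_map]
        have := hp.2
        rwa [Finset.sum] at this
    refine ⟨Sum.inr ⟨p.support.val.map fun x => (p x, x), hM⟩, ?_⟩
    show Sum.inr _ = Sum.inr _
    apply congrArg; apply Subtype.ext
    show DMfinsupp _ = p
    rw [DMfinsupp_map_single]
    have : (p.support.val.map fun x => Finsupp.single x (p x)).sum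
        = ∑ x ∈ p.support, Finsupp.single x (p x) := rfl
    rw [this]
    exact Finsupp.sum_single p

/-- bisimulations between alternating probabilistic systems are exactly
`≡^α`-simulations between alternating multi-transition systems representing them. -/
theorem alt_bisim_iff_alt_kernel_simulation (A : Type u) {X₁ X₂ : Type u}
    (b₁ : X₁ → (AltDistF A).obj X₁) (b₂ : X₂ → (AltDistF A).obj X₂)
    (a₁ : X₁ → (AltMSetF A).obj X₁) (a₂ : X₂ → (AltMSetF A).obj X₂)
    (h₁ : (alphaAlt A).app X₁ ∘ a₁ = b₁) (h₂ : (alphaAlt A).app X₂ ∘ a₂ = b₂)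
    (R : X₁ → X₂ → Prop) :
    IsBisimulation (AltDistF A) b₁ b₂ R ↔
      IsSimulation (AltMSetF A) (kernelRel (alphaAlt A)) a₁ a₂ R := by
  subst h₁ h₂
  have nat : ∀ {X Y : Type u} (f : X → Y) (w : (AltMSetF A).obj X),
      (alphaAlt A).app Y ((AltMSetF A).map (TypeCat.ofHom f) w) = (AltDistF A).map (TypeCat.ofHom f) ((alphaAlt A).app X w) := by
    intro X Y f w
    exact ConcreteCategory.congr_hom ((alphaAlt A).naturality (TypeCat.ofHom f)) w
  constructor
  · intro hb x y hR
    obtain ⟨w, hw1, hw2⟩ := hb x y hR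
    obtain ⟨w', rfl⟩ := alphaAlt_surjective A _ w
    refine ⟨w', ?_, ?_⟩
    · show (alphaAlt A).app X₁ (a₁ x) = (alphaAlt A).app X₁ _
      rw [nat, hw1]; rfl
    · show (alphaAlt A).app X₂ _ = (alphaAlt A).app X₂ (a₂ y)
      rw [nat, hw2]; rfl
  · intro hs x y hR
    obtain ⟨w', k1, k2⟩ := hs x y hR
    refine ⟨(alphaAlt A).app _ w', ?_, ?_⟩
    · rw [← nat]
      exact k1.symm
    · rw [← nat]
      exact k2
end
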